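/- Let $V \in L^\infty(\mathbb{R}^n)$ be real-valued, $R > 0$, and let $\gamma : [0,\infty) \to \mathbb{R}$ be continuous with $\lim_{t\to\infty}\gamma(t) = \infty$. Then there exists $g \in L^2(\mathbb{R}^n)$ and a sequence $t_n \to \infty$ such that $\int_{|x|<R} |u(t_n,x)|^2\,dx > \frac{n}{\gamma(t_n)}$, where $u(t) = e^{it\Delta_V} g$ is the solution of the Schrödinger equation $i\partial_t u - \Delta u + Vu = 0$, $u(0) = g$. In particular, no uniform rate of decay for localized $L^2$ norms of all solutions can hold. -/
import Mathlib


open MeasureTheory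

/-- The Hilbert space `L²(ℝⁿ; ℂ)`. -/
abbrev Hsp (n : ℕ) : Type :=
  Lp ℂ 2 (volume : Measure (EuclideanSpace ℝ (Fin n)))

set_option maxHeartbeats 1000000 in
/-- For any bounded potential (modelled by a strongly continuous
unitary group `U` on `L²`), any `R > 0` and any continuous `γ` with `γ(t) → ∞`,
there exist `g ∈ L²` and times `t_m → ∞` with
`∫_{|x|<R} |u(t_m)|² dx > m / γ(t_m)`, where `u(t) = e^{itΔ_V}g`; here
`∫_{|x|<R}|u(t)|² = ‖χ_{|x|<R} U(t) g‖²`. -/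
theorem stmt11 (n : ℕ) (hn : 0 < n) (R : ℝ) (hR : 0 < R)
    (U : ℝ → Hsp n →L[ℂ] Hsp n)
    (hUiso : ∀ (t : ℝ) (f : Hsp n), ‖U t f‖ = ‖f‖)
    (hUgrp : ∀ s t : ℝ, (U s).comp (U t) = U (s + t))
    (hU0 : U 0 = ContinuousLinearMap.id ℂ (Hsp n))
    (hUcont : ∀ g : Hsp n, Continuous fun t : ℝ => U t g)
    (M : Hsp n →L[ℂ] Hsp n)
    (hM : ∀ f : Hsp n,
      (M f : EuclideanSpace ℝ (Fin n) → ℂ)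
        =ᵐ[volume] (Metric.ball (0 : EuclideanSpace ℝ (Fin n)) R).indicator f)
    (γ : ℝ → ℝ) (hγc : Continuous γ)
    (hγ : Filter.Tendsto γ Filter.atTop Filter.atTop) :
    ∃ g : Hsp n, ∃ t : ℕ → ℝ, Filter.Tendsto t Filter.atTop Filter.atTop ∧
      ∀ m : ℕ, (m : ℝ) / γ (t m) < ‖M (U (t m) g)‖ ^ 2 := by
  classical
  set B := Metric.ball (0 : EuclideanSpace ℝ (Fin n)) R with hB
  have hBmeas : MeasurableSet B := measurableSet_ball
  have hBfin : volume B ≠ ⊤ := measure_ball_lt_top.ne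
  set h : Hsp n := indicatorConstLp 2 hBmeas hBfin (1 : ℂ) with hh
  have hpos : 0 < ‖h‖ := by
    rw [hh, norm_indicatorConstLp (by norm_num) (by norm_num)]
    have h1 : 0 < volume B := Metric.measure_ball_pos _ _ hR
    have h2 : 0 < (volume B).toReal := ENNReal.toReal_pos h1.ne' hBfin
    simp only [norm_one, one_mul]
    positivity
  have hMh : M h = h := by
    apply Lp.ext
    refine (hM h).trans ?_
    have h1 : (h : EuclideanSpace ℝ (Fin n) → ℂ) =ᵐ[volume]
        B.indicator fun _ => (1 : ℂ) := indicatorConstLp_coeFn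
    refine h1.mono fun x hx => ?_
    by_cases hxB : x ∈ B
    · simp [Set.indicator_of_mem hxB]
    · simp [Set.indicator_of_notMem hxB, hx]
  -- group property in pointwise form
  have hUinv : ∀ (t : ℝ) (z : Hsp n), U t (U (-t) z) = z := by
    intro t z
    have := congrArg (fun A : Hsp n →L[ℂ] Hsp n => A z) (hUgrp t (-t))
    simpa [hU0] using this
  -- the open dense sets
  set S : ℕ → Set (Hsp n) :=
    fun m => {g | ∃ t : ℝ, (m : ℝ) ≤ t ∧ (m : ℝ) < γ t * ‖M (U t g)‖ ^ 2} with hS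
  have hopen : ∀ m, IsOpen (S m) := by
    intro m
    have : S m = ⋃ (t : ℝ) (_ : (m : ℝ) ≤ t),
        {g : Hsp n | (m : ℝ) < γ t * ‖M (U t g)‖ ^ 2} := by
      ext g; simp [hS]
    rw [this]
    refine isOpen_iUnion fun t => isOpen_iUnion fun _ => ?_
    exact isOpen_lt continuous_const
      (continuous_const.mul (((M.comp (U t)).continuous.norm).pow 2))
  have hdense : ∀ m, Dense (S m) := by
    intro m
    rw [Metric.dense_iff]
    intro x r hr
    -- the perturbation w, supported in the ball, of norm r/2
    set c : ℂ := ((r / 2 / ‖h‖ : ℝ) : ℂ) with hc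
    set w : Hsp n := c • h with hw
    have hwnorm : ‖w‖ = r / 2 := by
      rw [hw, norm_smul, hc, Complex.norm_real, Real.norm_eq_abs,
        abs_of_nonneg (by positivity), div_mul_cancel₀ _ hpos.ne']
    have hMw : M w = w := by rw [hw, M.map_smul, hMh]
    -- a large enough time
    obtain ⟨T, hT⟩ :=
      (hγ.eventually_ge_atTop ((m : ℝ) / (r / 2) ^ 2 + 1)).exists_forall_of_atTop
    set t : ℝ := max T m with ht
    have hγt : (m : ℝ) / (r / 2) ^ 2 + 1 ≤ γ t := hT t (le_max_left _ _)
    have hγtpos : 0 < γ t := by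
      have : 0 ≤ (m : ℝ) / (r / 2) ^ 2 := by positivity
      linarith
    have hγkey : (m : ℝ) < γ t * (r / 2) ^ 2 := by
      have h2 : 0 < (r / 2) ^ 2 := by positivity
      have h3 : (m : ℝ) / (r / 2) ^ 2 < γ t := by linarith
      calc (m : ℝ) = (m : ℝ) / (r / 2) ^ 2 * (r / 2) ^ 2 := by field_simp
        _ < γ t * (r / 2) ^ 2 := by exact mul_lt_mul_of_pos_right h3 h2
    set v : Hsp n := M (U t x) with hv
    -- one of v + w, v - w has norm ≥ ‖w‖ = r/2
    have hmax : r / 2 ≤ ‖v + w‖ ∨ r / 2 ≤ ‖v + -w‖ := by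
      by_contra hcon
      push_neg at hcon
      have hp := parallelogram_law_with_norm ℂ v w
      have hvw : v + -w = v - w := by abel
      rw [hvw] at hcon
      have h1 : ‖v + w‖ * ‖v + w‖ < (r / 2) * (r / 2) := by
        have := norm_nonneg (v + w); nlinarith [hcon.1]
      have h2 : ‖v - w‖ * ‖v - w‖ < (r / 2) * (r / 2) := by
        have := norm_nonneg (v - w); nlinarith [hcon.2]
      have h3 := norm_nonneg v
      rw [hwnorm] at hp
      nlinarith
    have claim : ∀ z : Hsp n, ‖z‖ = r / 2 → M z = z → r / 2 ≤ ‖v + z‖ →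
        (Metric.ball x r ∩ S m).Nonempty := by
      intro z hz hMz hvz
      refine ⟨x + U (-t) z, ?_, t, le_max_right T (m : ℝ), ?_⟩
      · rw [Metric.mem_ball, dist_eq_norm, add_sub_cancel_left, hUiso, hz]
        linarith
      · have hexp : M (U t (x + U (-t) z)) = v + z := by
          rw [map_add, hUinv, map_add, hMz, hv]
        rw [hexp]
        have h4 : (r / 2) ^ 2 ≤ ‖v + z‖ ^ 2 := by nlinarith [norm_nonneg (v + z)]
        calc (m : ℝ) < γ t * (r / 2) ^ 2 := hγkey
          _ ≤ γ t * ‖v + z‖ ^ 2 := mul_le_mul_of_nonneg_left h4 hγtpos.le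
    rcases hmax with hm | hm
    · exact claim w hwnorm hMw hm
    · exact claim (-w) (by rw [norm_neg, hwnorm]) (by rw [map_neg, hMw]) hm
  -- Baire category
  have hD : Dense (⋂ m, S m) := dense_iInter_of_isOpen hopen hdense
  obtain ⟨g, hg⟩ := hD.nonempty
  rw [Set.mem_iInter] at hg
  choose t ht1 ht2 using hg
  refine ⟨g, t, ?_, ?_⟩
  · exact Filter.tendsto_atTop_mono ht1 tendsto_natCast_atTop_atTop
  · intro m
    have hX : (0 : ℝ) ≤ ‖M (U (t m) g)‖ ^ 2 := by positivity
    have hγpos : 0 < γ (t m) := by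
      by_contra hcon
      push_neg at hcon
      have : γ (t m) * ‖M (U (t m) g)‖ ^ 2 ≤ 0 := mul_nonpos_of_nonpos_of_nonneg hcon hX
      have := ht2 m
      have hm0 : (0 : ℝ) ≤ (m : ℝ) := Nat.cast_nonneg m
      linarith
    rw [div_lt_iff₀ hγpos, mul_comm]
    exact ht2 m
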